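/- Let Σ ∈ ℝ^{p×p} be symmetric positive definite, ϑ̂ ∈ ℝ^p, and let Δ = I_w ⊗ ϑ̃ᵀ where ϑ̃ = ϑ − ϑ̂. Then ϑ̃ᵀ Σ⁻¹ ϑ̃ ≤ 1 if and only if for every positive semidefinite Λ ∈ ℝ^{w×w} the block matrix condition [Δᵀ; I_w]ᵀ · diag(−Λ ⊗ Σ⁻¹, Λ) · [Δᵀ; I_w] ⪰ 0 holds, i.e., Λ − (I_w ⊗ ϑ̃ᵀ)(Λ ⊗ Σ⁻¹)(I_w ⊗ ϑ̃) ⪰ 0 for all Λ ⪰ 0. -/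

import Mathlib

open Matrix Kronecker

/-- the ellipsoid condition `ϑ̃ᵀ Σ⁻¹ ϑ̃ ≤ 1` holds iff for every PSD multiplier `Λ`
one has `Λ − (I_w ⊗ ϑ̃ᵀ)(Λ ⊗ Σ⁻¹)(I_w ⊗ ϑ̃) ⪰ 0`. -/
theorem stmt_1 (w p : ℕ) (hw : 0 < w)
    (Sig : Matrix (Fin p) (Fin p) ℝ) (hSig : Sig.PosDef)
    (ϑ ϑhat : Fin p → ℝ) :
    (ϑ - ϑhat) ⬝ᵥ Sig⁻¹ *ᵥ (ϑ - ϑhat) ≤ 1 ↔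
      ∀ Λ : Matrix (Fin w) (Fin w) ℝ, Λ.PosSemidef →
        (Λ - Matrix.reindex (Equiv.prodUnique (Fin w) (Fin 1)) (Equiv.prodUnique (Fin w) (Fin 1))
            (((1 : Matrix (Fin w) (Fin w) ℝ) ⊗ₖ
                Matrix.of (fun (_ : Fin 1) (j : Fin p) => (ϑ - ϑhat) j)) *
              (Λ ⊗ₖ Sig⁻¹) *
              ((1 : Matrix (Fin w) (Fin w) ℝ) ⊗ₖ
                Matrix.of (fun (j : Fin p) (_ : Fin 1) => (ϑ - ϑhat) j)))).PosSemidef := by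
  set v := ϑ - ϑhat with hv
  set c : ℝ := v ⬝ᵥ Sig⁻¹ *ᵥ v with hc
  have key : ∀ Λ : Matrix (Fin w) (Fin w) ℝ,
      Matrix.reindex (Equiv.prodUnique (Fin w) (Fin 1)) (Equiv.prodUnique (Fin w) (Fin 1))
        (((1 : Matrix (Fin w) (Fin w) ℝ) ⊗ₖ
            Matrix.of (fun (_ : Fin 1) (j : Fin p) => v j)) *
          (Λ ⊗ₖ Sig⁻¹) *
          ((1 : Matrix (Fin w) (Fin w) ℝ) ⊗ₖ
            Matrix.of (fun (j : Fin p) (_ : Fin 1) => v j))) = c • Λ := by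
    intro Λ
    rw [← Matrix.mul_kronecker_mul, ← Matrix.mul_kronecker_mul]
    ext i j
    simp only [Matrix.reindex_apply, Matrix.submatrix_apply, Equiv.prodUnique,
      Matrix.kroneckerMap_apply, Matrix.smul_apply, Matrix.one_mul, Matrix.mul_one,
      Equiv.coe_fn_symm_mk]
    rw [mul_comm]
    congr 1
    simp only [Matrix.mul_apply, hc, dotProduct, Matrix.mulVec, Matrix.of_apply,
      Finset.sum_mul, Finset.mul_sum]
    rw [Finset.sum_comm]
    exact Finset.sum_congr rfl fun _ _ => Finset.sum_congr rfl fun _ _ => by ring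
  constructor
  · intro h Λ hΛ
    rw [key]
    have : Λ - c • Λ = (1 - c) • Λ := by rw [sub_smul, one_smul]
    rw [this]
    refine Matrix.posSemidef_iff_dotProduct_mulVec.mpr ⟨by rw [Matrix.IsHermitian, Matrix.conjTranspose_smul, hΛ.1.eq]; simp, fun x => ?_⟩
    rw [Matrix.smul_mulVec, dotProduct_smul, smul_eq_mul]
    exact mul_nonneg (by linarith) ((Matrix.posSemidef_iff_dotProduct_mulVec.mp hΛ).2 x)
  · intro h
    have h1 := h 1 Matrix.PosSemidef.one
    rw [key] at h1
    have h2 : (1 : Matrix (Fin w) (Fin w) ℝ) - c • 1 = (1 - c) • 1 := by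
      rw [sub_smul, one_smul]
    rw [h2] at h1
    have := (Matrix.posSemidef_iff_dotProduct_mulVec.mp h1).2 (fun _ => 1)
    have hent : ((1 - c) • (1 : Matrix (Fin w) (Fin w) ℝ)) ⟨0, hw⟩ ⟨0, hw⟩ = 1 - c := by
      simp
    have hd : 0 ≤ 1 - c := by
      have := (Matrix.posSemidef_iff_dotProduct_mulVec.mp h1).2 (Pi.single ⟨0, hw⟩ 1)
      simpa [Matrix.smul_mulVec, Matrix.one_mulVec, dotProduct_smul,
        dotProduct, Pi.single_apply, mul_ite] using this
    linarith
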